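/- Let C ∈ (-1, 0) and ν ∈ (0, |C|). Set θ_SP(ν) = (1/2)·arccos((1 + ν^2 - 2C^2)/(1 - ν^2)) and θ_BP = (1/2)·arccos(1 - 2C^2). Then the set of complex roots of the polynomial φ₄(z) = (1-ν^2)z^4 + 2(2C^2 - ν^2 - 1)z^2 + (1-ν^2) is exactly {e^{iθ_SP(ν)}, e^{-iθ_SP(ν)}, -e^{iθ_SP(ν)}, -e^{-iθ_SP(ν)}} (four distinct points of modulus one), and 0 < θ_SP(ν) < θ_BP. -/

import Mathlib

open Real Complex

/-- For `C ∈ (-1,0)` and `ν ∈ (0,|C|)`, the roots of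
`φ₄(z) = (1-ν²)z⁴ + 2(2C² - ν² - 1)z² + (1-ν²)` are exactly the four distinct points
`{e^{iθ_SP}, e^{-iθ_SP}, -e^{iθ_SP}, -e^{-iθ_SP}}` of modulus one, where
`θ_SP = arccos((1+ν²-2C²)/(1-ν²))/2`, and `0 < θ_SP < θ_BP = arccos(1-2C²)/2`. -/
theorem saddle_points_transition_zone (C ν : ℝ) (hC : C ∈ Set.Ioo (-1 : ℝ) 0)
    (hν : ν ∈ Set.Ioo 0 |C|) :
    let θSP : ℝ := Real.arccos ((1 + ν ^ 2 - 2 * C ^ 2) / (1 - ν ^ 2)) / 2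
    let θBP : ℝ := Real.arccos (1 - 2 * C ^ 2) / 2
    ({z : ℂ | (1 - (ν : ℂ) ^ 2) * z ^ 4 + 2 * (2 * (C : ℂ) ^ 2 - (ν : ℂ) ^ 2 - 1) * z ^ 2
        + (1 - (ν : ℂ) ^ 2) = 0} =
      {Complex.exp (θSP * Complex.I), Complex.exp (-(θSP : ℂ) * Complex.I),
        -Complex.exp (θSP * Complex.I), -Complex.exp (-(θSP : ℂ) * Complex.I)}) ∧
    ([Complex.exp (θSP * Complex.I), Complex.exp (-(θSP : ℂ) * Complex.I),
        -Complex.exp (θSP * Complex.I), -Complex.exp (-(θSP : ℂ) * Complex.I)] : List ℂ).Pairwise (· ≠ ·) ∧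
    (∀ z : ℂ, (1 - (ν : ℂ) ^ 2) * z ^ 4 + 2 * (2 * (C : ℂ) ^ 2 - (ν : ℂ) ^ 2 - 1) * z ^ 2
        + (1 - (ν : ℂ) ^ 2) = 0 → ‖z‖ = 1) ∧
    0 < θSP ∧ θSP < θBP := by
  obtain ⟨hC1, hC0⟩ := hC
  obtain ⟨hν0, hνC⟩ := hν
  intro θSP θBP
  have hν2 : ν ^ 2 < C ^ 2 := by
    have h1 : ν ^ 2 < |C| ^ 2 := by
      apply sq_lt_sq' (by linarith [abs_nonneg C]) hνC
    rwa [_root_.sq_abs] at h1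
  have hC2 : C ^ 2 < 1 := by nlinarith
  have hden : (0:ℝ) < 1 - ν ^ 2 := by nlinarith
  set a : ℝ := (1 + ν ^ 2 - 2 * C ^ 2) / (1 - ν ^ 2) with ha_def
  have ha_lt : a < 1 := by
    rw [ha_def, div_lt_one hden]; nlinarith
  have ha_gt : -1 < a := by
    rw [ha_def, lt_div_iff₀ hden]; nlinarith
  have hθeq : 2 * θSP = Real.arccos a := by
    show 2 * (Real.arccos a / 2) = Real.arccos a; ring
  have hcos2 : Real.cos (2 * θSP) = a := by
    rw [hθeq, Real.cos_arccos ha_gt.le ha_lt.le]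
  have hθpos : 0 < θSP := by
    have := Real.arccos_pos.mpr ha_lt
    show 0 < Real.arccos a / 2; linarith
  have hθlt : θSP < π / 2 := by
    have h := (Real.arccos_le_pi a).lt_of_ne fun h => by
      have := Real.arccos_eq_pi.mp h; linarith
    show Real.arccos a / 2 < π / 2; linarith
  have hsin : 0 < Real.sin θSP := Real.sin_pos_of_pos_of_lt_pi hθpos
    (by linarith [Real.pi_pos])
  have hcosθ : 0 < Real.cos θSP := Real.cos_pos_of_mem_Ioo
    ⟨by linarith [Real.pi_pos], hθlt⟩
  -- real identity
  have hreal : Real.cos θSP ^ 2 - Real.sin θSP ^ 2 = a := by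
    have h1 := Real.cos_two_mul θSP
    have h2 := Real.sin_sq_add_cos_sq θSP
    rw [hcos2] at h1; nlinarith
  set E : ℂ := Complex.exp (θSP * Complex.I) with hE_def
  set F : ℂ := Complex.exp (-(θSP : ℂ) * Complex.I) with hF_def
  have hE : E = (Real.cos θSP : ℂ) + (Real.sin θSP : ℂ) * Complex.I := by
    rw [hE_def, Complex.exp_mul_I, Complex.ofReal_cos, Complex.ofReal_sin]
  have hF : F = (Real.cos θSP : ℂ) - (Real.sin θSP : ℂ) * Complex.I := by
    rw [hF_def, Complex.exp_mul_I, ← Complex.ofReal_neg, ← Complex.ofReal_cos,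
      ← Complex.ofReal_sin, Real.cos_neg, Real.sin_neg]
    push_cast; ring
  have hpy : (Real.cos θSP : ℂ) ^ 2 + (Real.sin θSP : ℂ) ^ 2 = 1 := by
    exact_mod_cast Real.cos_sq_add_sin_sq θSP
  have hEF : E * F = 1 := by
    rw [hE, hF]
    linear_combination hpy - (Real.sin θSP : ℂ) ^ 2 * Complex.I_sq
  have hE2F2 : E ^ 2 + F ^ 2 = 2 * (a : ℂ) := by
    rw [hE, hF]
    have hca : (Real.cos θSP : ℂ) ^ 2 - (Real.sin θSP : ℂ) ^ 2 = (a : ℂ) := by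
      exact_mod_cast hreal
    linear_combination 2 * hca + 2 * (Real.sin θSP : ℂ) ^ 2 * Complex.I_sq
  have hA : (1 - (ν:ℂ) ^ 2) * (a : ℂ) = 1 + (ν:ℂ) ^ 2 - 2 * (C:ℂ) ^ 2 := by
    have : (1 - ν ^ 2) * a = 1 + ν ^ 2 - 2 * C ^ 2 := by
      rw [ha_def]; field_simp
    exact_mod_cast congrArg Complex.ofReal this
  have key : ∀ z : ℂ, (1 - (ν : ℂ) ^ 2) * z ^ 4 + 2 * (2 * (C : ℂ) ^ 2 - (ν : ℂ) ^ 2 - 1) * z ^ 2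
      + (1 - (ν : ℂ) ^ 2)
      = (1 - (ν:ℂ) ^ 2) * ((z - E) * (z + E) * ((z - F) * (z + F))) := by
    intro z
    linear_combination (1 - (ν:ℂ) ^ 2) * z ^ 2 * hE2F2 -
      (1 - (ν:ℂ) ^ 2) * (E * F + 1) * hEF + 2 * z ^ 2 * hA
  have hDne : (1 - (ν:ℂ) ^ 2) ≠ 0 := by
    have : ((1 - ν ^ 2 : ℝ) : ℂ) ≠ 0 := Complex.ofReal_ne_zero.mpr (ne_of_gt hden)
    push_cast at this; exact this
  have hroot_iff : ∀ z : ℂ, ((1 - (ν : ℂ) ^ 2) * z ^ 4 +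
      2 * (2 * (C : ℂ) ^ 2 - (ν : ℂ) ^ 2 - 1) * z ^ 2 + (1 - (ν : ℂ) ^ 2) = 0)
      ↔ (z = E ∨ z = F ∨ z = -E ∨ z = -F) := by
    intro z
    rw [key z, mul_eq_zero, or_iff_right hDne, mul_eq_zero, mul_eq_zero, mul_eq_zero,
      sub_eq_zero, sub_eq_zero, add_eq_zero_iff_eq_neg, add_eq_zero_iff_eq_neg]
    tauto
  have hEneF : E ≠ F := by
    intro h
    rw [hE, hF] at h
    have h2 : (Real.sin θSP : ℂ) * Complex.I = 0 := by linear_combination h / 2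
    rcases mul_eq_zero.mp h2 with h3 | h3
    · have : Real.sin θSP = 0 := by exact_mod_cast h3
      linarith
    · exact Complex.I_ne_zero h3
  have hEne0 : E ≠ 0 := Complex.exp_ne_zero _
  have hFne0 : F ≠ 0 := Complex.exp_ne_zero _
  have hEnenF : E ≠ -F := by
    intro h
    rw [hE, hF] at h
    have h2 : (Real.cos θSP : ℂ) = 0 := by linear_combination h / 2
    have : Real.cos θSP = 0 := by exact_mod_cast h2
    linarith
  refine ⟨?_, ?_, ?_, hθpos, ?_⟩
  · ext z
    simp only [Set.mem_setOf_eq, Set.mem_insert_iff, Set.mem_singleton_iff]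
    exact hroot_iff z
  · have h1 : E ≠ -E := fun h => hEne0 (by linear_combination h / 2)
    have h2 : F ≠ -E := fun h => hEnenF (by linear_combination h)
    have h3 : F ≠ -F := fun h => hFne0 (by linear_combination h / 2)
    have h4 : -E ≠ -F := fun h => hEneF (neg_injective h)
    refine List.Pairwise.cons ?_ (List.Pairwise.cons ?_ (List.Pairwise.cons ?_
      (List.pairwise_singleton _ _)))
    · intro c hc
      simp only [List.mem_cons, List.mem_singleton, List.not_mem_nil, or_false] at hc
      rcases hc with rfl | rfl | rfl
      exacts [hEneF, h1, hEnenF]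
    · intro c hc
      simp only [List.mem_cons, List.mem_singleton, List.not_mem_nil, or_false] at hc
      rcases hc with rfl | rfl
      exacts [h2, h3]
    · intro c hc
      simp only [List.mem_singleton] at hc
      subst hc; exact h4
  · have habsE : ‖E‖ = 1 := by
      rw [hE_def]; exact Complex.norm_exp_ofReal_mul_I θSP
    have habsF : ‖F‖ = 1 := by
      rw [hF_def, show -(θSP:ℂ) * Complex.I = ((-θSP : ℝ) : ℂ) * Complex.I by push_cast; ring]
      exact Complex.norm_exp_ofReal_mul_I (-θSP)
    intro z hz
    rcases (hroot_iff z).mp hz with rfl | rfl | rfl | rfl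
    · exact habsE
    · exact habsF
    · rw [norm_neg]; exact habsE
    · rw [norm_neg]; exact habsF
  · have hgt : 1 - 2 * C ^ 2 < a := by
      rw [ha_def, lt_div_iff₀ hden]
      nlinarith [mul_pos (pow_pos hν0 2) (show (0:ℝ) < 1 - C ^ 2 by linarith)]
    have := Real.strictAntiOn_arccos (Set.mem_Icc.mpr ⟨by nlinarith, by nlinarith⟩)
      (Set.mem_Icc.mpr ⟨ha_gt.le, ha_lt.le⟩) hgt
    show Real.arccos a / 2 < Real.arccos (1 - 2 * C ^ 2) / 2
    linarith
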